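/- Let d ≥ 1 be an integer (d = 2j), let s' ∈ ℝ, and let P be a polynomial in two variables x, y over ℂ whose degree in each of the two variables is at most d, satisfying the two partial differential equations d·(x−y)·P = (x² − s')·∂P/∂x − (y² − s')·∂P/∂y and d·(x+y)·P = (x² + s')·∂P/∂x + (y² + s')·∂P/∂y. Then there exists c ∈ ℂ such that P = c·(x·y + s')^d. (This is the Wick-symbol form of the mixed minimum uncertainty states under Condition 1, i.e. u' = v' = 0 and t' = −s'.) -/

import Mathlib

open MvPolynomial Finsupp

lemma coeff_pderiv {σ R : Type*} [DecidableEq σ] [CommRing R] (i : σ) (μ : σ →₀ ℕ)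
    (p : MvPolynomial σ R) :
    coeff μ (pderiv i p) = (μ i + 1 : ℕ) * coeff (μ + Finsupp.single i 1) p := by
  induction p using MvPolynomial.induction_on' with
  | add p q hp hq => simp [hp, hq, mul_add]
  | monomial ν a =>
    rw [pderiv_monomial, coeff_monomial, coeff_monomial]
    by_cases hc : ν = μ + Finsupp.single i 1
    · have hsub : ν - Finsupp.single i 1 = μ := by
        subst hc; ext j
        by_cases hj : j = i <;> simp [Finsupp.tsub_apply, hj]
      rw [if_pos hsub, if_pos hc]
      subst hc
      push_cast
      simp [mul_comm]
    · rw [if_neg hc, mul_zero]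
      split_ifs with h2
      · have hz : ν i = 0 := by
          by_contra hne
          apply hc
          ext j
          by_cases hj : j = i
        
          · subst hj
            have := DFunLike.congr_fun h2 j
            simp [Finsupp.tsub_apply] at this
            simp [← this]
            omega
          · have := DFunLike.congr_fun h2 j
            simp [Finsupp.tsub_apply, Finsupp.single_eq_of_ne' (Ne.symm hj), Finsupp.add_apply] at this ⊢
            omega
        simp [hz]
      · rfl


noncomputable def eAux (m n : ℕ) : Fin 2 →₀ ℕ :=
  Finsupp.single 0 m + Finsupp.single 1 n

lemma eAux_apply0 (m n : ℕ) : eAux m n 0 = m := by simp [eAux]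
lemma eAux_apply1 (m n : ℕ) : eAux m n 1 = n := by
  simp [eAux, Finsupp.single_apply]

lemma eAux_surj (μ : Fin 2 →₀ ℕ) : μ = eAux (μ 0) (μ 1) := by
  ext j
  fin_cases j
  · simp [eAux_apply0]
  · simp [eAux_apply1]

lemma eAux_eq_iff {m n m' n' : ℕ} : eAux m n = eAux m' n' ↔ m = m' ∧ n = n' := by
  constructor
  · intro h
    exact ⟨by simpa [eAux_apply0] using DFunLike.congr_fun h 0,
      by simpa [eAux_apply1] using DFunLike.congr_fun h 1⟩
  · rintro ⟨rfl, rfl⟩; rfl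

lemma eAux_shift0 (m n : ℕ) : eAux (m + 1) n = Finsupp.single 0 1 + eAux m n := by
  ext j; fin_cases j
  · simp [eAux_apply0, eAux]; omega
  · simp [eAux_apply1, eAux, Finsupp.single_apply]

lemma eAux_shift1 (m n : ℕ) : eAux m (n + 1) = Finsupp.single 1 1 + eAux m n := by
  ext j; fin_cases j
  · simp [eAux_apply0, eAux, Finsupp.single_apply]
  · simp [eAux_apply1, eAux, Finsupp.single_apply]; omega

lemma coeff_eAux_X0_mul (m n : ℕ) (Q : MvPolynomial (Fin 2) ℂ) :
    coeff (eAux (m + 1) n) (X 0 * Q) = coeff (eAux m n) Q := by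
  rw [eAux_shift0, coeff_X_mul]

lemma coeff_eAux_X1_mul (m n : ℕ) (Q : MvPolynomial (Fin 2) ℂ) :
    coeff (eAux m (n + 1)) (X 1 * Q) = coeff (eAux m n) Q := by
  rw [eAux_shift1, coeff_X_mul]

lemma coeff_eAux_X0_mul_zero (n : ℕ) (Q : MvPolynomial (Fin 2) ℂ) :
    coeff (eAux 0 n) (X 0 * Q) = 0 := by
  rw [coeff_X_mul']
  simp [eAux_apply0]

lemma coeff_eAux_X1_mul_zero (m : ℕ) (Q : MvPolynomial (Fin 2) ℂ) :
    coeff (eAux m 0) (X 1 * Q) = 0 := by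
  rw [coeff_X_mul']
  simp [eAux_apply1]

lemma coeff_eAux_pd0 (m n : ℕ) (P : MvPolynomial (Fin 2) ℂ) :
    coeff (eAux m n) (pderiv 0 P) = ((m : ℂ) + 1) * coeff (eAux (m + 1) n) P := by
  rw [_root_.coeff_pderiv, eAux_apply0, eAux_shift0, add_comm (Finsupp.single 0 1)]
  push_cast
  ring

lemma coeff_eAux_pd1 (m n : ℕ) (P : MvPolynomial (Fin 2) ℂ) :
    coeff (eAux m n) (pderiv 1 P) = ((n : ℂ) + 1) * coeff (eAux m (n + 1)) P := by
  rw [_root_.coeff_pderiv, eAux_apply1, eAux_shift1, add_comm (Finsupp.single 1 1)]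
  push_cast
  ring

lemma coeff_eAux_binom (s : ℂ) (d m n : ℕ) :
    coeff (eAux m n) ((X 0 * X 1 + C s) ^ d : MvPolynomial (Fin 2) ℂ)
      = if m = n ∧ m ≤ d then (d.choose m : ℂ) * s ^ (d - m) else 0 := by
  rw [add_pow]
  have hterm : ∀ k : ℕ, (X 0 * X 1 : MvPolynomial (Fin 2) ℂ) ^ k * (C s) ^ (d - k)
      * (d.choose k : MvPolynomial (Fin 2) ℂ)
      = monomial (eAux k k) ((d.choose k : ℂ) * s ^ (d - k)) := by
    intro k
    rw [mul_pow, X_pow_eq_monomial, X_pow_eq_monomial, ← C_pow,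
      ← map_natCast (C : ℂ →+* MvPolynomial (Fin 2) ℂ)]
    rw [monomial_mul, mul_assoc, ← C_mul, mul_comm (monomial _ _), C_mul_monomial]
    simp [eAux, mul_comm]
  rw [Finset.sum_congr rfl (fun k _ => hterm k), coeff_sum]
  have hco : ∀ k : ℕ, coeff (eAux m n) (monomial (eAux k k) ((d.choose k : ℂ) * s ^ (d - k)))
      = if k = m ∧ k = n then (d.choose k : ℂ) * s ^ (d - k) else 0 := by
    intro k
    rw [coeff_monomial]
    congr 1
    simp [eAux_eq_iff]
  rw [Finset.sum_congr rfl (fun k _ => hco k)]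
  by_cases hmn : m = n
  · subst hmn
    simp only [and_self]
    rw [Finset.sum_ite_eq' (Finset.range (d + 1)) m (fun k => (d.choose k : ℂ) * s ^ (d - k))]
    simp [Nat.lt_succ_iff]
  · rw [if_neg (by tauto), Finset.sum_eq_zero]
    intro k _
    rw [if_neg (by rintro ⟨rfl, rfl⟩; exact hmn rfl)]

lemma coeff_eAux_X0sq_pd (m n : ℕ) (P : MvPolynomial (Fin 2) ℂ) :
    coeff (eAux (m + 1) n) (X 0 ^ 2 * pderiv 0 P) = (m : ℂ) * coeff (eAux m n) P := by
  rw [pow_two, mul_assoc]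
  cases m with
  | zero => rw [coeff_eAux_X0_mul, coeff_eAux_X0_mul_zero]; simp
  | succ k => rw [coeff_eAux_X0_mul, coeff_eAux_X0_mul, coeff_eAux_pd0]; push_cast; ring

lemma coeff_eAux_X1sq_pd (m n : ℕ) (P : MvPolynomial (Fin 2) ℂ) :
    coeff (eAux m (n + 1)) (X 1 ^ 2 * pderiv 1 P) = (n : ℂ) * coeff (eAux m n) P := by
  rw [pow_two, mul_assoc]
  cases n with
  | zero => rw [coeff_eAux_X1_mul, coeff_eAux_X1_mul_zero]; simp
  | succ k => rw [coeff_eAux_X1_mul, coeff_eAux_X1_mul, coeff_eAux_pd1]; push_cast; ring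

lemma coeff_eAux_X0sq_zero (n : ℕ) (Q : MvPolynomial (Fin 2) ℂ) :
    coeff (eAux 0 n) (X 0 ^ 2 * Q) = 0 := by
  rw [pow_two, mul_assoc, coeff_eAux_X0_mul_zero]

lemma coeff_eAux_X1sq_zero (m : ℕ) (Q : MvPolynomial (Fin 2) ℂ) :
    coeff (eAux m 0) (X 1 ^ 2 * Q) = 0 := by
  rw [pow_two, mul_assoc, coeff_eAux_X1_mul_zero]

lemma choose_id (d k : ℕ) :
    ((d : ℂ) - k) * (d.choose k : ℂ) = ((k : ℂ) + 1) * (d.choose (k + 1) : ℂ) := by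
  by_cases hk : k < d
  · have h1 := Nat.choose_succ_right_eq d k
    have h2 : ((d : ℂ) - k) = ((d - k : ℕ) : ℂ) := by
      rw [Nat.cast_sub hk.le]
    rw [h2]
    have := congrArg (Nat.cast : ℕ → ℂ) h1
    push_cast at this
    linear_combination -this
  · rw [Nat.choose_eq_zero_of_lt (show d < k + 1 by omega), Nat.cast_zero, mul_zero]
    rcases eq_or_lt_of_le (not_lt.mp hk) with h | h
    · rw [← h]; ring
    · rw [Nat.choose_eq_zero_of_lt h, Nat.cast_zero, mul_zero]

/-- Wick-symbol form of the mixed minimum uncertainty states (Condition 1):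
a bivariate polynomial P of degree ≤ d in each variable satisfying
d(x−y)P = (x²−s')∂ₓP − (y²−s')∂ᵧP and d(x+y)P = (x²+s')∂ₓP + (y²+s')∂ᵧP
must be a multiple of (xy + s')^d. -/
theorem wick_mixed_solution (d : ℕ) (hd : 1 ≤ d) (s' : ℝ)
    (P : MvPolynomial (Fin 2) ℂ)
    (hdeg0 : P.degreeOf 0 ≤ d) (hdeg1 : P.degreeOf 1 ≤ d)
    (heq1 : C (d : ℂ) * (X 0 - X 1) * P
      = (X 0 ^ 2 - C ((s' : ℝ) : ℂ)) * pderiv 0 P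
        - (X 1 ^ 2 - C ((s' : ℝ) : ℂ)) * pderiv 1 P)
    (heq2 : C (d : ℂ) * (X 0 + X 1) * P
      = (X 0 ^ 2 + C ((s' : ℝ) : ℂ)) * pderiv 0 P
        + (X 1 ^ 2 + C ((s' : ℝ) : ℂ)) * pderiv 1 P) :
    ∃ c : ℂ, P = C c * (X 0 * X 1 + C ((s' : ℝ) : ℂ)) ^ d := by
  set s : ℂ := ((s' : ℝ) : ℂ) with hs
  set a : ℕ → ℕ → ℂ := fun m n => coeff (eAux m n) P with ha
  have h2C : (C (2 : ℂ) : MvPolynomial (Fin 2) ℂ) = 2 := map_ofNat C 2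
  have hA : C (2 : ℂ) * (C (d : ℂ) * (X 0 * P))
      = C (2 : ℂ) * (X 0 ^ 2 * pderiv 0 P) + C (2 : ℂ) * (C s * pderiv 1 P) := by
    rw [h2C]; linear_combination heq1 + heq2
  have hB : C (2 : ℂ) * (C (d : ℂ) * (X 1 * P))
      = C (2 : ℂ) * (X 1 ^ 2 * pderiv 1 P) + C (2 : ℂ) * (C s * pderiv 0 P) := by
    rw [h2C]; linear_combination heq2 - heq1
  have relA : ∀ m n : ℕ, ((d : ℂ) - m) * a m n = s * ((n : ℂ) + 1) * a (m + 1) (n + 1) := by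
    intro m n
    have h := congrArg (coeff (eAux (m + 1) n)) hA
    simp only [coeff_add, coeff_C_mul, coeff_eAux_X0_mul, coeff_eAux_X0sq_pd,
      coeff_eAux_pd1] at h
    linear_combination h / 2
  have relB : ∀ m n : ℕ, ((d : ℂ) - n) * a m n = s * ((m : ℂ) + 1) * a (m + 1) (n + 1) := by
    intro m n
    have h := congrArg (coeff (eAux m (n + 1))) hB
    simp only [coeff_add, coeff_C_mul, coeff_eAux_X1_mul, coeff_eAux_X1sq_pd,
      coeff_eAux_pd0] at h
    linear_combination h / 2
  have relA0 : ∀ n : ℕ, s * ((n : ℂ) + 1) * a 0 (n + 1) = 0 := by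
    intro n
    have h := congrArg (coeff (eAux 0 n)) hA
    simp only [coeff_add, coeff_C_mul, coeff_eAux_X0_mul_zero, coeff_eAux_X0sq_zero,
      coeff_eAux_pd1] at h
    linear_combination -h / 2
  have relB0 : ∀ m : ℕ, s * ((m : ℂ) + 1) * a (m + 1) 0 = 0 := by
    intro m
    have h := congrArg (coeff (eAux m 0)) hB
    simp only [coeff_add, coeff_C_mul, coeff_eAux_X1_mul_zero, coeff_eAux_X1sq_zero,
      coeff_eAux_pd0] at h
    linear_combination -h / 2
  by_cases hsz : s = 0
  · -- s = 0 : only the (d,d) coefficient survives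
    refine ⟨a d d, ?_⟩
    have hm : ∀ m n : ℕ, m ≠ d → a m n = 0 := by
      intro m n hmd
      have h0 := relA m n
      rw [hsz] at h0
      simp only [zero_mul] at h0
      have hne : (d : ℂ) - m ≠ 0 := by
        intro hc
        have : (d : ℂ) = m := sub_eq_zero.mp hc
        exact hmd (by exact_mod_cast this.symm)
      exact (mul_eq_zero.mp h0).resolve_left hne
    have hn : ∀ m n : ℕ, n ≠ d → a m n = 0 := by
      intro m n hnd
      have h0 := relB m n
      rw [hsz] at h0
      simp only [zero_mul] at h0
      have hne : (d : ℂ) - n ≠ 0 := by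
        intro hc
        have : (d : ℂ) = n := sub_eq_zero.mp hc
        exact hnd (by exact_mod_cast this.symm)
      exact (mul_eq_zero.mp h0).resolve_left hne
    have key : ∀ m n : ℕ,
        a m n = a d d * (if m = n ∧ m ≤ d then (d.choose m : ℂ) * s ^ (d - m) else 0) := by
      intro m n
      by_cases hmd : m = d
      · by_cases hnd : n = d
        · rw [hmd, hnd, if_pos ⟨rfl, le_refl d⟩]
          simp [hsz]
        · rw [hn m n hnd, if_neg (by rintro ⟨h1, -⟩; exact hnd (by omega)), mul_zero]
      · rw [hm m n hmd]
        by_cases hc : m = n ∧ m ≤ d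
        · rw [if_pos hc, hsz, zero_pow (by omega)]
          ring
        · rw [if_neg hc, mul_zero]
    apply MvPolynomial.ext
    intro μ
    rw [eAux_surj μ, coeff_C_mul, coeff_eAux_binom]
    exact key (μ 0) (μ 1)
  · -- s ≠ 0
    have hzero : ∀ m n : ℕ, m ≠ n → a m n = 0 := by
      intro m
      induction m with
      | zero =>
        intro n hn
        obtain ⟨n', rfl⟩ : ∃ n', n = n' + 1 := ⟨n - 1, by omega⟩
        have h0 := relA0 n'
        have h1 : (n' : ℂ) + 1 ≠ 0 := Nat.cast_add_one_ne_zero n'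
        exact (mul_eq_zero.mp h0).resolve_left (mul_ne_zero hsz h1)
      | succ m ih =>
        intro n hn
        cases n with
        | zero =>
          have h0 := relB0 m
          have h1 : (m : ℂ) + 1 ≠ 0 := Nat.cast_add_one_ne_zero m
          exact (mul_eq_zero.mp h0).resolve_left (mul_ne_zero hsz h1)
        | succ n =>
          have h0 := relA m n
          rw [ih n (by omega)] at h0
          have h1 : (n : ℂ) + 1 ≠ 0 := Nat.cast_add_one_ne_zero n
          simp only [mul_zero] at h0
          rcases mul_eq_zero.mp h0.symm with h | h
          · rcases mul_eq_zero.mp h with h | h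
            · exact absurd h hsz
            · exact absurd h h1
          · exact h
    have hdiag : ∀ k : ℕ, s ^ k * a k k = a 0 0 * (d.choose k : ℂ) := by
      intro k
      induction k with
      | zero => simp
      | succ k ih =>
        have h0 := relA k k
        have h1 : (k : ℂ) + 1 ≠ 0 := Nat.cast_add_one_ne_zero k
        have hch := choose_id d k
        apply mul_left_cancel₀ h1
        rw [pow_succ]
        linear_combination (-(s ^ k)) * h0 + ((d : ℂ) - k) * ih + (a 0 0) * hch
    refine ⟨a 0 0 / s ^ d, ?_⟩
    have key : ∀ m n : ℕ,
        a m n = a 0 0 / s ^ d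
          * (if m = n ∧ m ≤ d then (d.choose m : ℂ) * s ^ (d - m) else 0) := by
      intro m n
      by_cases hmn : m = n
      · subst hmn
        by_cases hmd : m ≤ d
        · rw [if_pos ⟨rfl, hmd⟩]
          have hsd : (s : ℂ) ^ d ≠ 0 := pow_ne_zero d hsz
          have hsplit : s ^ d = s ^ m * s ^ (d - m) := by
            rw [← pow_add]
            congr 1
            omega
          field_simp
          rw [hsplit]
          linear_combination (s ^ (d - m)) * hdiag m
        · rw [if_neg (by rintro ⟨-, h⟩; exact hmd h)]
          have := hdiag m
          rw [Nat.choose_eq_zero_of_lt (by omega), Nat.cast_zero, mul_zero] at this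
          have := (mul_eq_zero.mp this).resolve_left (pow_ne_zero m hsz)
          rw [this, mul_zero]
      · rw [hzero m n hmn, if_neg (by rintro ⟨h, -⟩; exact hmn h), mul_zero]
    apply MvPolynomial.ext
    intro μ
    rw [eAux_surj μ, coeff_C_mul, coeff_eAux_binom]
    exact key (μ 0) (μ 1)
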